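/- Let n = 4. Let Y solve Y'(h) = c₄·[ (1/2)·(Y(h)/ω₃)^{2/3} − 1 ]^{3/2} with Y(0) = 2·2^{3/2}·ω₃, where c₄ = 6ω₃·(2/(3√3)). Then Y exists for all h ≥ 0, and there exists a constant C > 0 such that h ≤ C·log(Y(h)) for all h ≥ 0. -/

import Mathlib

open Real

noncomputable def phiA (x : ℝ) : ℝ := x - Real.cosh x / Real.sinh x

lemma phiA_hasDerivAt {x : ℝ} (hx : 0 < x) :
    HasDerivAt phiA (Real.cosh x ^ 2 / Real.sinh x ^ 2) x := by
  have hs : Real.sinh x ≠ 0 := ne_of_gt (Real.sinh_pos_iff.2 hx)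
  have h1 : HasDerivAt (fun y => Real.cosh y / Real.sinh y)
      ((Real.sinh x * Real.sinh x - Real.cosh x * Real.cosh x) / Real.sinh x ^ 2) x :=
    (Real.hasDerivAt_cosh x).div (Real.hasDerivAt_sinh x) hs
  have h2 := (hasDerivAt_id x).sub h1
  refine h2.congr_deriv ?_
  have hc := Real.cosh_sq_sub_sinh_sq x
  field_simp
  nlinarith [Real.sinh_pos_iff.2 hx]

lemma phiA_strictMonoOn : StrictMonoOn phiA (Set.Ioi 0) := by
  apply strictMonoOn_of_deriv_pos (convex_Ioi 0)
  · exact fun x hx => ((phiA_hasDerivAt hx).continuousAt).continuousWithinAt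
  · intro x hx
    rw [interior_Ioi] at hx
    rw [(phiA_hasDerivAt hx).deriv]
    have := Real.cosh_pos (x := x)
    have := Real.sinh_pos_iff.2 hx
    positivity

lemma phiA_exists (t : ℝ) : ∃ x : ℝ, 0 < x ∧ phiA x = t := by
  set a : ℝ := min 1 ((Real.exp 2)⁻¹ * (|t| + 2)⁻¹) with ha_def
  set b : ℝ := max 1 (t + 2) with hb_def
  have hexp2 : (0:ℝ) < Real.exp 2 := Real.exp_pos 2
  have habs : (0:ℝ) < |t| + 2 := by positivity
  have ha0 : 0 < a := by
    apply lt_min one_pos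
    positivity
  have ha1 : a ≤ 1 := min_le_left _ _
  have hab : a ≤ b := le_trans ha1 (le_max_left _ _)
  have hb1 : 1 ≤ b := le_max_left _ _
  -- upper bound : t ≤ phiA b
  have hbub : t ≤ phiA b := by
    have hsb : 0 < Real.sinh b := Real.sinh_pos_iff.2 (lt_of_lt_of_le one_pos hb1)
    have hcoth : Real.cosh b / Real.sinh b ≤ 2 := by
      rw [div_le_iff₀ hsb]
      have h1 : (2:ℝ) ≤ Real.exp 1 := by
        have := Real.add_one_le_exp 1
        linarith
      have h2 : Real.exp 1 ≤ Real.exp b := Real.exp_le_exp.2 hb1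
      have h3 : Real.exp (-b) ≤ 1 := Real.exp_le_one_iff.2 (by linarith)
      have h4 : 0 < Real.exp (-b) := Real.exp_pos _
      have h5 : Real.exp b * Real.exp (-b) = 1 := by
        rw [← Real.exp_add]; simp
      rw [Real.cosh_eq, Real.sinh_eq]
      nlinarith
    have : t + 2 ≤ b := le_max_right _ _
    unfold phiA
    linarith
  -- lower bound : phiA a ≤ t
  have halb : phiA a ≤ t := by
    have hsa : 0 < Real.sinh a := Real.sinh_pos_iff.2 ha0
    have hsinh_le : Real.sinh a ≤ a * Real.exp 2 := by
      have h1 : Real.exp (-(2*a)) + (2*a) ≥ 1 := by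
        have := Real.add_one_le_exp (-(2*a)); linarith
      have h2 : Real.exp (-a) ≤ 1 := Real.exp_le_one_iff.2 (by linarith)
      have h3 : Real.exp a ≤ Real.exp 2 := Real.exp_le_exp.2 (by linarith)
      have h4 : 0 < Real.exp a := Real.exp_pos _
      have h5 : 0 < Real.exp (-a) := Real.exp_pos _
      have h6 : Real.exp (-(2*a)) = Real.exp (-a) * Real.exp (-a) := by
        rw [← Real.exp_add]; ring_nf
      have h7 : Real.exp a * Real.exp (-a) = 1 := by rw [← Real.exp_add]; simp
      rw [Real.sinh_eq]
      -- sinh a = (exp a - exp (-a))/2 ≤ a * exp 2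
      nlinarith
    have hcoth : |t| + 2 ≤ Real.cosh a / Real.sinh a := by
      have h1 : (1:ℝ) ≤ Real.cosh a := Real.one_le_cosh a
      have h2 : a ≤ (Real.exp 2)⁻¹ * (|t| + 2)⁻¹ := min_le_right _ _
      have h3 : Real.sinh a ≤ (|t| + 2)⁻¹ := by
        calc Real.sinh a ≤ a * Real.exp 2 := hsinh_le
          _ ≤ (Real.exp 2)⁻¹ * (|t| + 2)⁻¹ * Real.exp 2 := by
              apply mul_le_mul_of_nonneg_right h2 hexp2.le
          _ = (|t| + 2)⁻¹ := by field_simp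
      calc (|t| + 2) = ((|t| + 2)⁻¹)⁻¹ := by rw [inv_inv]
        _ ≤ (Real.sinh a)⁻¹ := by
            apply inv_anti₀ hsa h3
        _ ≤ Real.cosh a / Real.sinh a := by
            rw [div_eq_mul_inv]
            nlinarith [inv_pos.2 hsa]
    have : -|t| ≤ t := neg_abs_le t
    unfold phiA
    linarith
  obtain ⟨x, hx, hfx⟩ := intermediate_value_Icc hab
    (fun y hy => ((phiA_hasDerivAt (lt_of_lt_of_le ha0 hy.1)).continuousAt).continuousWithinAt)
    ⟨halb, hbub⟩
  exact ⟨x, lt_of_lt_of_le ha0 hx.1, hfx⟩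

noncomputable def phiF : Set.Ioi (0:ℝ) → ℝ := fun x => phiA x

lemma phiF_strictMono : StrictMono phiF := fun x y hxy =>
  phiA_strictMonoOn x.2 y.2 (Subtype.coe_lt_coe.2 hxy)

lemma phiF_surj : Function.Surjective phiF := fun t => by
  obtain ⟨x, hx0, hx⟩ := phiA_exists t
  exact ⟨⟨x, hx0⟩, hx⟩

noncomputable def uInv : ℝ → ℝ :=
  fun t => ((StrictMono.orderIsoOfSurjective phiF phiF_strictMono phiF_surj).symm t : ℝ)

lemma uInv_pos (t : ℝ) : 0 < uInv t :=
  ((StrictMono.orderIsoOfSurjective phiF phiF_strictMono phiF_surj).symm t).2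

lemma phiA_uInv (t : ℝ) : phiA (uInv t) = t :=
  StrictMono.orderIsoOfSurjective_self_symm_apply phiF phiF_strictMono phiF_surj t

lemma uInv_mono : StrictMono uInv := fun s t hst => by
  have := (StrictMono.orderIsoOfSurjective phiF phiF_strictMono phiF_surj).symm.strictMono hst
  exact this

lemma uInv_continuous : Continuous uInv :=
  continuous_subtype_val.comp
    (StrictMono.orderIsoOfSurjective phiF phiF_strictMono phiF_surj).symm.continuous

lemma uInv_hasDerivAt (t : ℝ) :
    HasDerivAt uInv (Real.sinh (uInv t) ^ 2 / Real.cosh (uInv t) ^ 2) t := by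
  have hw : 0 < uInv t := uInv_pos t
  have hc : 0 < Real.cosh (uInv t) := Real.cosh_pos _
  have hs : 0 < Real.sinh (uInv t) := Real.sinh_pos_iff.2 hw
  have h := HasDerivAt.of_local_left_inverse (uInv_continuous.continuousAt)
    (phiA_hasDerivAt hw) (by positivity)
    (Filter.Eventually.of_forall phiA_uInv)
  refine h.congr_deriv ?_
  rw [← one_div, one_div_div]

lemma uInv_ge (t : ℝ) : t + 1 ≤ uInv t := by
  have hw : 0 < uInv t := uInv_pos t
  have hs : 0 < Real.sinh (uInv t) := Real.sinh_pos_iff.2 hw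
  have h1 : Real.sinh (uInv t) < Real.cosh (uInv t) := Real.sinh_lt_cosh _
  have h2 : (1:ℝ) ≤ Real.cosh (uInv t) / Real.sinh (uInv t) :=
    (one_le_div hs).2 h1.le
  have := phiA_uInv t
  unfold phiA at this
  linarith

lemma pow_rpow_helper {x : ℝ} (hx : 0 ≤ x) : ((x ^ 2 : ℝ)) ^ ((3:ℝ)/2) = x ^ 3 := by
  rw [← Real.rpow_natCast x 2, ← Real.rpow_mul hx, ← Real.rpow_natCast x 3]
  norm_num

set_option maxHeartbeats 1000000 in
theorem ode_aux :
    ∃ Y : ℝ → ℝ,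
      Y 0 = 2 * 2 ^ ((3 : ℝ) / 2) * (2 * π ^ 2) ∧
      (∀ h : ℝ, 0 ≤ h →
        HasDerivAt Y
          ((6 * (2 * π ^ 2) * (2 / (3 * Real.sqrt 3))) *
            ((1 / 2) * (Y h / (2 * π ^ 2)) ^ ((2 : ℝ) / 3) - 1) ^ ((3 : ℝ) / 2)) h) ∧
      ∃ C > 0, ∀ h : ℝ, 0 ≤ h → h ≤ C * Real.log (Y h) := by
  have hπ : 0 < π := Real.pi_pos
  set ω : ℝ := 2 * π ^ 2 with hω_def
  have hω : 0 < ω := by positivity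
  set α : ℝ := 2 / (3 * Real.sqrt 6) with hα_def
  have h6 : (0:ℝ) < Real.sqrt 6 := Real.sqrt_pos.2 (by norm_num)
  have hα : 0 < α := by positivity
  set K : ℝ := 2 ^ ((3:ℝ)/2) * ω with hK_def
  have hK : 0 < K := by positivity
  have hr23 : (1:ℝ) < 2 ^ ((2:ℝ)/3) := by
    exact Real.one_lt_rpow_iff_of_pos two_pos |>.2 (Or.inl ⟨one_lt_two, by norm_num⟩)
  set s : ℝ := Real.sqrt (2 ^ ((2:ℝ)/3) - 1) with hs_def
  have hs : 0 < s := Real.sqrt_pos.2 (by linarith)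
  set u0 : ℝ := Real.arsinh s with hu0_def
  have hu0 : 0 < u0 := Real.arsinh_pos_iff.2 hs
  have hcosh_u0 : Real.cosh u0 = 2 ^ ((1:ℝ)/3) := by
    rw [hu0_def, Real.cosh_arsinh, hs_def, Real.sq_sqrt (by linarith)]
    rw [show (1:ℝ) + (2 ^ ((2:ℝ)/3) - 1) = 2 ^ ((2:ℝ)/3) by ring]
    rw [Real.sqrt_eq_rpow, ← Real.rpow_mul (by norm_num : (0:ℝ) ≤ 2)]
    norm_num
  set β : ℝ := phiA u0 with hβ_def
  have huβ : uInv β = u0 := by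
    apply phiA_strictMonoOn.injOn (Set.mem_Ioi.2 (uInv_pos β)) (Set.mem_Ioi.2 hu0)
    rw [phiA_uInv]
  have h32 : (2:ℝ) ^ ((3:ℝ)/2) = 2 * Real.sqrt 2 := by
    rw [show (3:ℝ)/2 = 1 + 1/2 by norm_num, Real.rpow_add two_pos, Real.rpow_one,
      ← Real.sqrt_eq_rpow]
  have hK2 : 2 ≤ (2:ℝ) ^ ((3:ℝ)/2) := by
    calc (2:ℝ) = 2 ^ (1:ℝ) := (Real.rpow_one 2).symm
      _ ≤ 2 ^ ((3:ℝ)/2) := Real.rpow_le_rpow_of_exponent_le one_le_two (by norm_num)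
  clear_value s u0 β α K ω
  refine ⟨fun h => K * Real.cosh (uInv (α * h + β)) ^ 3, ?_, ?_, ?_⟩
  · -- initial condition
    show K * Real.cosh (uInv (α * 0 + β)) ^ 3 = 2 * 2 ^ ((3:ℝ)/2) * ω
    rw [show α * 0 + β = β by ring, huβ, hcosh_u0, hK_def]
    rw [← Real.rpow_natCast ((2:ℝ) ^ ((1:ℝ)/3)) 3, ← Real.rpow_mul (by norm_num : (0:ℝ) ≤ 2)]
    norm_num
    ring
  · -- the ODE
    intro h _
    have hw0 : 0 < uInv (α * h + β) := uInv_pos _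
    have hc : 0 < Real.cosh (uInv (α * h + β)) := Real.cosh_pos _
    have hsw : 0 < Real.sinh (uInv (α * h + β)) := Real.sinh_pos_iff.2 hw0
    have d1 : HasDerivAt (fun h : ℝ => α * h + β) α h := by
      simpa using ((hasDerivAt_id h).const_mul α).add_const β
    have d2 : HasDerivAt (fun h : ℝ => uInv (α * h + β))
        (Real.sinh (uInv (α * h + β)) ^ 2 / Real.cosh (uInv (α * h + β)) ^ 2 * α) h :=
      by have := (uInv_hasDerivAt (α * h + β)).comp h d1; exact this
    have d3 : HasDerivAt (fun h : ℝ => Real.cosh (uInv (α * h + β)))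
        (Real.sinh (uInv (α * h + β)) *
          (Real.sinh (uInv (α * h + β)) ^ 2 / Real.cosh (uInv (α * h + β)) ^ 2 * α)) h :=
      (Real.hasDerivAt_cosh _).comp h d2
    have d4 := (d3.pow 3).const_mul K
    have DD : HasDerivAt (fun h : ℝ => K * Real.cosh (uInv (α * h + β)) ^ 3)
        ((6 * ω * (2 / (3 * Real.sqrt 3))) *
          ((1 / 2) * ((K * Real.cosh (uInv (α * h + β)) ^ 3) / ω) ^ ((2 : ℝ) / 3) - 1)
            ^ ((3 : ℝ) / 2)) h := by
      refine d4.congr_deriv ?_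
      symm
      set w : ℝ := uInv (α * h + β) with hw_def
      have e1 : K * Real.cosh w ^ 3 / ω = 2 ^ ((3:ℝ)/2) * Real.cosh w ^ 3 := by
        rw [hK_def]; field_simp
      have e2 : (2:ℝ) ^ ((3:ℝ)/2) * Real.cosh w ^ 3 = (2 * Real.cosh w ^ 2) ^ ((3:ℝ)/2) := by
        rw [Real.mul_rpow (by norm_num) (by positivity), pow_rpow_helper hc.le]
      have e3 : ((2 * Real.cosh w ^ 2) ^ ((3:ℝ)/2)) ^ ((2:ℝ)/3) = 2 * Real.cosh w ^ 2 := by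
        rw [← Real.rpow_mul (by positivity), show (3:ℝ)/2 * (2/3) = 1 by norm_num,
          Real.rpow_one]
      have e4 : (1:ℝ)/2 * (2 * Real.cosh w ^ 2) - 1 = Real.sinh w ^ 2 := by
        rw [Real.sinh_sq]; ring
      rw [e1, e2, e3, e4, pow_rpow_helper hsw.le]
      have h6' : Real.sqrt 6 = Real.sqrt 2 * Real.sqrt 3 := by
        rw [show (6:ℝ) = 2 * 3 by norm_num, Real.sqrt_mul (by norm_num)]
      have s2 : Real.sqrt 2 ^ 2 = 2 := Real.sq_sqrt (by norm_num)
      have s3 : Real.sqrt 3 ^ 2 = 3 := Real.sq_sqrt (by norm_num)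
      have hs2 : 0 < Real.sqrt 2 := Real.sqrt_pos.2 (by norm_num)
      have hs3 : 0 < Real.sqrt 3 := Real.sqrt_pos.2 (by norm_num)
      have key : (2:ℝ) ^ ((3:ℝ)/2) * 3 * α = 6 * (2 / (3 * Real.sqrt 3)) := by
        rw [h32, hα_def, h6']
        field_simp
        nlinarith [s2, s3, hs2, hs3]
      push_cast
      calc 6 * ω * (2 / (3 * Real.sqrt 3)) * Real.sinh w ^ 3
          = (6 * (2 / (3 * Real.sqrt 3))) * ω * Real.sinh w ^ 3 := by ring
        _ = ((2:ℝ) ^ ((3:ℝ)/2) * 3 * α) * ω * Real.sinh w ^ 3 := by rw [key]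
        _ = K * (3 * Real.cosh w ^ (3 - 1) *
            (Real.sinh w * (Real.sinh w ^ 2 / Real.cosh w ^ 2 * α))) := by
            rw [hK_def]
            field_simp
    exact DD
  · -- growth bound
    have key : ∀ h : ℝ, 0 ≤ h →
        3 * (α * h + β + 1) ≤ Real.log (K * Real.cosh (uInv (α * h + β)) ^ 3) ∧
        3 * u0 ≤ Real.log (K * Real.cosh (uInv (α * h + β)) ^ 3) := by
      intro h hh
      have hw0 : 0 < uInv (α * h + β) := uInv_pos _
      have hwge : (α * h + β) + 1 ≤ uInv (α * h + β) := uInv_ge _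
      have hwu0 : u0 ≤ uInv (α * h + β) := by
        rw [← huβ]
        exact (uInv_mono.le_iff_le).2 (by nlinarith)
      have hcosh_ge : Real.exp (uInv (α * h + β)) / 2 ≤ Real.cosh (uInv (α * h + β)) := by
        rw [Real.cosh_eq]
        have := Real.exp_pos (-(uInv (α * h + β)))
        linarith
      have hK8 : 8 ≤ K := by
        have hπ3 : 3 < π := Real.pi_gt_three
        rw [hK_def, hω_def]
        nlinarith
      have hY_ge : Real.exp (3 * uInv (α * h + β)) ≤ K * Real.cosh (uInv (α * h + β)) ^ 3 := by
        have h1 : Real.exp (3 * uInv (α * h + β)) = Real.exp (uInv (α * h + β)) ^ 3 := by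
          rw [← Real.exp_nat_mul]; norm_num
        have h2 : Real.exp (uInv (α * h + β)) ^ 3 ≤ 8 * Real.cosh (uInv (α * h + β)) ^ 3 := by
          have h2a : Real.exp (uInv (α * h + β)) ^ 3 ≤ (2 * Real.cosh (uInv (α * h + β))) ^ 3 :=
            pow_le_pow_left₀ (Real.exp_pos _).le (by linarith) 3
          nlinarith [h2a]
        have h3 : (0:ℝ) < Real.cosh (uInv (α * h + β)) ^ 3 := by positivity
        nlinarith
      have hlog : 3 * uInv (α * h + β) ≤ Real.log (K * Real.cosh (uInv (α * h + β)) ^ 3) := by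
        calc 3 * uInv (α * h + β) = Real.log (Real.exp (3 * uInv (α * h + β))) :=
              (Real.log_exp _).symm
          _ ≤ _ := Real.log_le_log (Real.exp_pos _) hY_ge
      exact ⟨by linarith, by linarith⟩
    set h₁ : ℝ := max 0 (-2 * (β + 1) / α) with hh₁_def
    have hh₁ : 0 ≤ h₁ := le_max_left _ _
    set C : ℝ := max (2 / (3 * α)) (h₁ / (3 * u0)) + 1 with hC_def
    have hCpos : 0 < C := by
      have h1 : (0:ℝ) ≤ 2 / (3 * α) := by positivity
      have h2 := le_max_left (2 / (3 * α)) (h₁ / (3 * u0))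
      rw [hC_def]; linarith
    refine ⟨C, hCpos, ?_⟩
    intro h hh
    obtain ⟨key1, key2⟩ := key h hh
    set L : ℝ := Real.log (K * Real.cosh (uInv (α * h + β)) ^ 3) with hL_def
    have hL0 : 0 < L := lt_of_lt_of_le (by positivity) key2
    rcases le_or_gt h h₁ with hcase | hcase
    · have e1 : h₁ / (3 * u0) * (3 * u0) = h₁ := div_mul_cancel₀ _ (by positivity)
      have e2 : h₁ / (3 * u0) * (3 * u0) ≤ h₁ / (3 * u0) * L :=
        mul_le_mul_of_nonneg_left key2 (by positivity)
      have e3 : h₁ / (3 * u0) ≤ C := by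
        have := le_max_right (2 / (3 * α)) (h₁ / (3 * u0))
        rw [hC_def]; linarith
      have e4 : h₁ / (3 * u0) * L ≤ C * L := mul_le_mul_of_nonneg_right e3 hL0.le
      have e2' : h₁ ≤ h₁ / (3 * u0) * L := e1.symm.trans_le e2
      exact hcase.trans (e2'.trans e4)
    · have e0 : -2 * (β + 1) / α ≤ h₁ := le_max_right _ _
      have e1 : -2 * (β + 1) < α * h := by
        have h' := lt_of_le_of_lt e0 hcase
        rw [div_lt_iff₀ hα] at h'
        linarith
      have e2 : 3 / 2 * α * h ≤ L := by nlinarith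
      have e3 : 2 / (3 * α) ≤ C := by
        have := le_max_left (2 / (3 * α)) (h₁ / (3 * u0))
        rw [hC_def]; linarith
      have e4 : h ≤ 2 / (3 * α) * L := by
        have h' : 2 / (3 * α) * L - h = 2 / (3 * α) * (L - 3 / 2 * α * h) := by
          field_simp
        nlinarith [mul_nonneg (by positivity : (0:ℝ) ≤ 2 / (3 * α)) (by linarith : (0:ℝ) ≤ L - 3 / 2 * α * h)]
      have e5 : 2 / (3 * α) * L ≤ C * L := mul_le_mul_of_nonneg_right e3 hL0.le
      exact e4.trans e5

/-- `n = 4` global existence and growth bound: the solution of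
`Y' = c₄·[(1/2)(Y/ω₃)^{2/3} − 1]^{3/2}` with `Y(0) = 2·2^{3/2}·ω₃`,
`c₄ = 6ω₃·(2/(3√3))`, `ω₃ = 2π²`, exists for all `h ≥ 0` and satisfies
`h ≤ C·log(Y(h))` for some `C > 0`. -/
theorem ode_global_dim_four :
    ∃ Y : ℝ → ℝ,
      Y 0 = 2 * 2 ^ ((3 : ℝ) / 2) * (2 * π ^ 2) ∧
      (∀ h : ℝ, 0 ≤ h →
        HasDerivAt Y
          ((6 * (2 * π ^ 2) * (2 / (3 * Real.sqrt 3))) *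
            ((1 / 2) * (Y h / (2 * π ^ 2)) ^ ((2 : ℝ) / 3) - 1) ^ ((3 : ℝ) / 2)) h) ∧
      ∃ C > 0, ∀ h : ℝ, 0 ≤ h → h ≤ C * Real.log (Y h) := by
  exact ode_aux
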